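/- arXiv:2201.08426 — 2 statements merged into one kernel-verified Lean document; each statement's English description precedes it below -/
import Mathlib

section
/- For every real u > 0 there exists a constant C > 0 such that for all t ≥ 0 one has |Φ̄(t,u) - 1| ≤ C e^{-2t}; that is, u = 1 is an exponentially stable fixed point of the flow Φ̄ for positive initial data. -/
open Real Filter

/-- `Φ̄(t,u) = e^t u / sqrt(1 + (e^{2t} - 1) u²)`. -/
noncomputable def PhiBar (t u : ℝ) : ℝ :=
  Real.exp t * u / Real.sqrt (1 + (Real.exp (2 * t) - 1) * u ^ 2)

/-- For every `u > 0` there is `C > 0` with `|Φ̄(t,u) - 1| ≤ C e^{-2t}` for all `t ≥ 0`: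
`u = 1` is an exponentially stable fixed point of the flow for positive initial data. -/
theorem stmt5 (u : ℝ) (hu : 0 < u) :
    ∃ C : ℝ, 0 < C ∧ ∀ t : ℝ, 0 ≤ t → |PhiBar t u - 1| ≤ C * Real.exp (-2 * t) := by
  set m := min 1 (u ^ 2) with hm
  have hm0 : 0 < m := lt_min one_pos (pow_pos hu 2)
  refine ⟨(|u ^ 2 - 1| + 1) / m, by positivity, fun t ht => ?_⟩
  set D := 1 + (Real.exp (2 * t) - 1) * u ^ 2 with hDdef
  have hA : (1:ℝ) ≤ Real.exp (2 * t) := Real.one_le_exp (by linarith)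
  have hDlb : Real.exp (2 * t) * m ≤ D := by
    rcases le_total (u ^ 2) 1 with h | h
    · have hme : m = u ^ 2 := min_eq_right h
      rw [hDdef, hme]; nlinarith [Real.exp_pos (2 * t)]
    · have hme : m = 1 := min_eq_left h
      rw [hDdef, hme]; nlinarith
  have hD0 : 0 < D := lt_of_lt_of_le (by positivity) hDlb
  have hsD : 0 < Real.sqrt D := Real.sqrt_pos.mpr hD0
  have hPhi : 0 ≤ PhiBar t u := by
    unfold PhiBar
    rw [← hDdef]
    positivity
  have he2 : Real.exp t ^ 2 = Real.exp (2 * t) := by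
    rw [two_mul, Real.exp_add, sq]
  have hsq : PhiBar t u ^ 2 - 1 = (u ^ 2 - 1) / D := by
    unfold PhiBar
    rw [← hDdef, div_pow, Real.sq_sqrt hD0.le, mul_pow, he2]
    field_simp
    ring
  have h1 : |PhiBar t u - 1| ≤ |PhiBar t u ^ 2 - 1| := by
    have e1 : |PhiBar t u ^ 2 - 1| = |PhiBar t u - 1| * |PhiBar t u + 1| := by
      rw [show PhiBar t u ^ 2 - 1 = (PhiBar t u - 1) * (PhiBar t u + 1) by ring, abs_mul]
    have e2 : |PhiBar t u + 1| = PhiBar t u + 1 := abs_of_nonneg (by linarith)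
    rw [e1, e2]
    nlinarith [abs_nonneg (PhiBar t u - 1)]
  have h2 : |PhiBar t u ^ 2 - 1| = |u ^ 2 - 1| / D := by
    rw [hsq, abs_div, abs_of_pos hD0]
  have h3 : |u ^ 2 - 1| / D ≤ (|u ^ 2 - 1| + 1) / m * Real.exp (-2 * t) := by
    have key : (|u ^ 2 - 1| + 1) / m * Real.exp (-2 * t)
        = (|u ^ 2 - 1| + 1) / (m * Real.exp (2 * t)) := by
      rw [neg_mul, Real.exp_neg]
      field_simp
    rw [key]
    apply div_le_div₀ (by positivity) (by linarith) (by positivity)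
    rw [mul_comm]; exact hDlb
  calc |PhiBar t u - 1| ≤ |u ^ 2 - 1| / D := h1.trans_eq h2
    _ ≤ _ := h3
end

section
/- A priori bound for the Allen–Cahn equation: Let d ≥ 1 and let u : [0,∞) × ℝ^d → ℝ be continuous, C^1 in time and C^2 in space on (0,∞) × ℝ^d, bounded on [δ,T] × ℝ^d for every 0 < δ < T, solving ∂_t u = Δu + u - u^3 on (0,∞) × ℝ^d with initial condition u(0,·) = u_0, where u_0 is continuous and satisfies sup_{x ∈ ℝ^d} |u_0(x)| e^{-|x|} < ∞. Then for every t > 0 and x ∈ ℝ^d one has |u(t,x)| ≤ e^t / sqrt(e^{2t} - 1). -/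
open Real Filter MeasureTheory

section AllenCahnHelpers
open Set

noncomputable def phiAC (r : ℝ) : ℝ := (Real.sqrt (1 - Real.exp (-2*r)))⁻¹

lemma oneSubExp_pos {r : ℝ} (hr : 0 < r) : 0 < 1 - Real.exp (-2*r) := by
  have : Real.exp (-2*r) < 1 := Real.exp_lt_one_iff.mpr (by linarith)
  linarith

lemma sqrtc_pos {r : ℝ} (hr : 0 < r) : 0 < Real.sqrt (1 - Real.exp (-2*r)) :=
  Real.sqrt_pos.mpr (oneSubExp_pos hr)

lemma phiAC_pos {r : ℝ} (hr : 0 < r) : 0 < phiAC r :=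
  inv_pos.mpr (sqrtc_pos hr)

lemma hasDerivAt_phiAC {r : ℝ} (hr : 0 < r) :
    HasDerivAt phiAC (phiAC r - phiAC r ^ 3) r := by
  have hc : HasDerivAt (fun s : ℝ => 1 - Real.exp (-2*s)) (2 * Real.exp (-2*r)) r := by
    have h1 : HasDerivAt (fun s : ℝ => -2*s) (-2) r := by
      simpa using (hasDerivAt_id r).const_mul (-2)
    have h2 := (Real.hasDerivAt_exp (-2*r)).comp r h1
    have := h2.const_sub 1
    exact this.congr_deriv (by ring)
  have hs : HasDerivAt (fun s : ℝ => Real.sqrt (1 - Real.exp (-2*s)))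
      (1 / (2 * Real.sqrt (1 - Real.exp (-2*r))) * (2 * Real.exp (-2*r))) r :=
    (Real.hasDerivAt_sqrt (ne_of_gt (oneSubExp_pos hr))).comp r hc
  have hne : Real.sqrt (1 - Real.exp (-2*r)) ≠ 0 := ne_of_gt (sqrtc_pos hr)
  have hinv := hs.inv hne
  have H : HasDerivAt phiAC
      (-(1 / (2 * Real.sqrt (1 - Real.exp (-2*r))) * (2 * Real.exp (-2*r))) /
        Real.sqrt (1 - Real.exp (-2*r)) ^ 2) r := hinv
  convert H using 1
  have hsq : Real.sqrt (1 - Real.exp (-2*r)) ^ 2 = 1 - Real.exp (-2*r) :=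
    Real.sq_sqrt (le_of_lt (oneSubExp_pos hr))
  set s := Real.sqrt (1 - Real.exp (-2*r)) with hs_def
  have key : phiAC r - phiAC r ^ 3 = (s^2 - 1) / s^3 := by
    unfold phiAC
    rw [← hs_def]
    field_simp
  rw [key, div_eq_div_iff (pow_ne_zero 3 hne) (pow_ne_zero 2 hne), hsq]
  field_simp
  simp only [show (-2:ℝ)*r = -(r*2) by ring, show -(2*r) = -(r*2) by ring] at hsq ⊢
  linear_combination (Real.exp (-(r*2))) * hsq

lemma phiAC_antitone {r₁ r₂ : ℝ} (h1 : 0 < r₁) (h2 : r₁ ≤ r₂) : phiAC r₂ ≤ phiAC r₁ := by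
  unfold phiAC
  apply inv_anti₀ (sqrtc_pos h1)
  apply Real.sqrt_le_sqrt
  have : Real.exp (-2*r₂) ≤ Real.exp (-2*r₁) := Real.exp_le_exp.mpr (by linarith)
  linarith

lemma phiAC_continuousAt {r : ℝ} (hr : 0 < r) : ContinuousAt phiAC r := by
  apply ContinuousAt.inv₀
  · exact (Real.continuous_sqrt.comp (by continuity)).continuousAt
  · exact ne_of_gt (sqrtc_pos hr)

lemma phiAC_ge {M r : ℝ} (hM : 0 ≤ M) (hr : 0 < r) (hr2 : r ≤ 1 / (2*(M+1)^2)) :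
    M ≤ phiAC r := by
  have hc : 1 - Real.exp (-2*r) ≤ 2*r := by
    have := Real.add_one_le_exp (-2*r)
    linarith
  have hs1 : Real.sqrt (1 - Real.exp (-2*r)) ≤ Real.sqrt (2*r) := Real.sqrt_le_sqrt hc
  have hs2 : Real.sqrt (2*r) ≤ 1/(M+1) := by
    rw [show (1/(M+1) : ℝ) = Real.sqrt ((1/(M+1))^2) from (Real.sqrt_sq (by positivity)).symm]
    apply Real.sqrt_le_sqrt
    rw [div_pow, one_pow, le_div_iff₀ (by positivity)]
    rw [le_div_iff₀ (by positivity)] at hr2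
    nlinarith
  have hpos := sqrtc_pos hr
  have hle : Real.sqrt (1 - Real.exp (-2*r)) ≤ 1/(M+1) := le_trans hs1 hs2
  have := inv_anti₀ hpos hle
  rw [one_div, inv_inv] at this
  unfold phiAC
  linarith

lemma phiAC_eq_target {t : ℝ} (ht : 0 < t) :
    Real.exp t / Real.sqrt (Real.exp (2*t) - 1) = phiAC t := by
  have hexp : Real.exp (2*t) - 1 = (Real.exp t)^2 * (1 - Real.exp (-2*t)) := by
    rw [show (-2:ℝ)*t = -(t+t) by ring, Real.exp_neg, Real.exp_add,
      show (2:ℝ)*t = t + t by ring, Real.exp_add]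
    have h := (Real.exp_pos t).ne'
    field_simp
  rw [hexp, Real.sqrt_mul (sq_nonneg _), Real.sqrt_sq (Real.exp_pos t).le]
  unfold phiAC
  exact div_mul_cancel_left₀ (Real.exp_pos t).ne' _

/-- Second derivative test direction: at a local max of a C² function, `g'' ≤ 0`. -/
lemma secondDeriv_nonpos_of_localMax {g : ℝ → ℝ} (hg : ContDiffAt ℝ 2 g 0)
    (hmax : IsLocalMax g 0) : deriv (deriv g) 0 ≤ 0 := by
  by_contra hD
  push_neg at hD
  -- g' 0 = 0
  have hev : ∀ᶠ s in nhds (0:ℝ), ContDiffAt ℝ 2 g s := hg.eventually (by norm_num)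
  have hdiff : ∀ᶠ s in nhds (0:ℝ), DifferentiableAt ℝ g s :=
    hev.mono fun s hs => hs.differentiableAt (by norm_num)
  have hg'0 : deriv g 0 = 0 := hmax.deriv_eq_zero
  -- deriv g has derivative deriv (deriv g) 0 > 0 at 0
  have hd2 : DifferentiableAt ℝ (deriv g) 0 := by
    have h1 : DifferentiableAt ℝ (fun x => fderiv ℝ g x (1:ℝ)) 0 :=
      ((hg.fderiv_right (m := 1) (by norm_num)).differentiableAt (by norm_num)).clm_apply (differentiableAt_const 1)
    have : deriv g = fun x => fderiv ℝ g x (1:ℝ) := by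
      funext x; exact (fderiv_apply_one_eq_deriv).symm
    rw [this]
    exact h1
  have hslope : Tendsto (slope (deriv g) 0) (nhdsWithin 0 {(0:ℝ)}ᶜ) (nhds (deriv (deriv g) 0)) :=
    hasDerivAt_iff_tendsto_slope.mp hd2.hasDerivAt
  have hpos : ∀ᶠ s in nhdsWithin (0:ℝ) (Set.Ioi 0), 0 < deriv g s := by
    have h1 : ∀ᶠ s in nhdsWithin (0:ℝ) (Set.Ioi 0), 0 < slope (deriv g) 0 s := by
      have := hslope.mono_left (nhdsWithin_mono 0 (fun s hs => ne_of_gt hs : Set.Ioi (0:ℝ) ⊆ {(0:ℝ)}ᶜ))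
      exact this.eventually (eventually_gt_nhds hD)
    have h2 : ∀ᶠ s in nhdsWithin (0:ℝ) (Set.Ioi 0), (0:ℝ) < s :=
      eventually_mem_nhdsWithin.mono fun s hs => hs
    filter_upwards [h1, h2] with s h1 h2
    have : slope (deriv g) 0 s = deriv g s / s := by
      simp [slope, hg'0, vsub_eq_sub]
      ring
    rw [this] at h1
    exact (div_pos_iff.mp h1).resolve_right (fun h => absurd h2 (not_lt.mpr h.2.le)) |>.1
  -- extract ε
  obtain ⟨S, hS, hSpos⟩ := hpos.exists_mem
  obtain ⟨T1, hT1⟩ := hdiff.exists_mem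
  obtain ⟨T2, hT2⟩ := hmax.exists_mem
  obtain ⟨e1, he1, hIoo1⟩ := mem_nhdsGT_iff_exists_Ioo_subset.mp hS
  obtain ⟨e2, he2pos, hb2⟩ := Metric.mem_nhds_iff.mp (Filter.inter_mem hT1.1 hT2.1)
  set ε := min e1 e2 / 2 with hε_def
  have he1pos : 0 < e1 := he1
  have hεpos : 0 < ε := by positivity
  have hεe1 : ε < e1 := by
    have : min e1 e2 ≤ e1 := min_le_left _ _
    have h2 : 0 < min e1 e2 := lt_min he1pos he2pos
    simp only [hε_def]; linarith
  have hεe2 : ε < e2 := by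
    have : min e1 e2 ≤ e2 := min_le_right _ _
    have h2 : 0 < min e1 e2 := lt_min he1pos he2pos
    simp only [hε_def]; linarith
  have hIccball : Set.Icc (0:ℝ) ε ⊆ Metric.ball (0:ℝ) e2 := by
    intro s hs
    simp only [Metric.mem_ball, Real.dist_eq, sub_zero]
    rw [abs_of_nonneg hs.1]
    exact lt_of_le_of_lt hs.2 hεe2
  have hcont : ContinuousOn g (Set.Icc 0 ε) := fun s hs =>
    ((hT1.2 s (hb2 (hIccball hs)).1).continuousAt).continuousWithinAt
  have hderivpos : ∀ s ∈ interior (Set.Icc (0:ℝ) ε), 0 < deriv g s := by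
    rw [interior_Icc]
    intro s hs
    exact hSpos s (hIoo1 ⟨hs.1, lt_trans hs.2 hεe1⟩)
  have hmono := strictMonoOn_of_deriv_pos (convex_Icc 0 ε) hcont hderivpos
  have hlt : g 0 < g ε := hmono (Set.left_mem_Icc.mpr hεpos.le) (Set.right_mem_Icc.mpr hεpos.le) hεpos
  have hle : g ε ≤ g 0 := hT2.2 ε (hb2 (hIccball (Set.right_mem_Icc.mpr hεpos.le))).2
  linarith

variable {E : Type*} [NormedAddCommGroup E] [NormedSpace ℝ E]

/-- derivative of the slice equals directional fderiv, as HasDerivAt of the deriv. -/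
lemma slice_hasDerivAt_deriv {f : E → ℝ} {x₀ v : E} (hf : ∀ x, ContDiffAt ℝ 2 f x) :
    HasDerivAt (deriv (fun s : ℝ => f (x₀ + s • v)))
      (fderiv ℝ (fun y => fderiv ℝ f y v) x₀ v) 0 := by
  have hpath : ∀ s : ℝ, HasDerivAt (fun s : ℝ => x₀ + s • v) v s := by
    intro s
    simpa using ((hasDerivAt_id s).smul_const v).const_add x₀
  have hderiv_eq : ∀ s : ℝ, deriv (fun s : ℝ => f (x₀ + s • v)) s
      = fderiv ℝ f (x₀ + s • v) v := by
    intro s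
    have hdf : DifferentiableAt ℝ f (x₀ + s • v) :=
      (hf _).differentiableAt (by norm_num)
    exact ((hdf.hasFDerivAt.comp_hasDerivAt s (hpath s))).deriv
  have hF : DifferentiableAt ℝ (fun y => fderiv ℝ f y v) x₀ :=
    (((hf x₀).fderiv_right (m := 1) (by norm_num)).differentiableAt (by norm_num)).clm_apply
      (differentiableAt_const v)
  have h2 : HasDerivAt (fun s : ℝ => fderiv ℝ f (x₀ + s • v) v)
      (fderiv ℝ (fun y => fderiv ℝ f y v) x₀ v) 0 := by
    have hF' : HasFDerivAt (fun y => fderiv ℝ f y v)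
        (fderiv ℝ (fun y => fderiv ℝ f y v) x₀) (x₀ + (0:ℝ) • v) := by
      simpa using hF.hasFDerivAt
    have := hF'.comp_hasDerivAt 0 (hpath 0)
    simpa [Function.comp_def] using this
  have : (deriv (fun s : ℝ => f (x₀ + s • v))) = fun s => fderiv ℝ f (x₀ + s • v) v :=
    funext hderiv_eq
  rw [this]
  exact h2

/-- If f has max at right endpoint b of [a,b] and differentiable there, deriv ≥ 0. -/
lemma deriv_nonneg_of_isMaxOn_right {f : ℝ → ℝ} {a b f' : ℝ} (hab : a < b)
    (hd : HasDerivAt f f' b) (hmax : ∀ s ∈ Set.Icc a b, f s ≤ f b) : 0 ≤ f' := by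
  have hslope : Tendsto (slope f b) (nhdsWithin b (Set.Iio b)) (nhds f') :=
    (hasDerivAt_iff_tendsto_slope.mp hd).mono_left
      (nhdsWithin_mono b (fun s hs => ne_of_lt hs))
  apply ge_of_tendsto hslope
  have hmem : Set.Ioo a b ∈ nhdsWithin b (Set.Iio b) :=
    mem_nhdsLT_iff_exists_Ioo_subset.mpr ⟨a, hab, subset_rfl⟩
  filter_upwards [hmem] with s hs
  have h1 : f s ≤ f b := hmax s ⟨hs.1.le, hs.2.le⟩
  have h2 : s - b < 0 := by linarith [hs.2]
  rw [slope_def_field]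
  have := div_pos_iff (a := f s - f b) (b := s - b)
  rcases eq_or_lt_of_le (show f s - f b ≤ 0 by linarith) with h | h
  · rw [h, zero_div]
  · exact le_of_lt (div_pos_of_neg_of_neg h h2)


/-- The Laplacian of `f : ℝ^d → ℝ`: the sum of the second partial derivatives in the
`d` coordinate directions. -/
noncomputable def laplacian {d : ℕ} (f : EuclideanSpace ℝ (Fin d) → ℝ)
    (x : EuclideanSpace ℝ (Fin d)) : ℝ :=
  ∑ i : Fin d,
    fderiv ℝ (fun y => fderiv ℝ f y (EuclideanSpace.single i 1)) x (EuclideanSpace.single i 1)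

lemma laplacian_neg {d : ℕ} (f : EuclideanSpace ℝ (Fin d) → ℝ) (x : EuclideanSpace ℝ (Fin d)) :
    laplacian (fun y => -f y) x = -laplacian f x := by
  unfold laplacian
  rw [← Finset.sum_neg_distrib]
  apply Finset.sum_congr rfl
  intro i _
  have h1 : (fun y => fderiv ℝ (fun z => -f z) y (EuclideanSpace.single i 1))
      = fun y => -(fderiv ℝ f y (EuclideanSpace.single i 1)) := by
    funext y; rw [fderiv_fun_neg]; simp
  rw [h1]
  rw [show (fun y => -(fderiv ℝ f y (EuclideanSpace.single i (1:ℝ))))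
      = fun y => -((fun z => fderiv ℝ f z (EuclideanSpace.single i (1:ℝ))) y) from rfl]
  rw [fderiv_fun_neg]
  simp

set_option maxHeartbeats 1000000 in
lemma keyBound (d : ℕ) (w : ℝ → EuclideanSpace ℝ (Fin d) → ℝ)
    (h_cont : ContinuousOn (fun p : ℝ × EuclideanSpace ℝ (Fin d) => w p.1 p.2)
      (Set.Ici 0 ×ˢ Set.univ))
    (h_time : ∀ t : ℝ, 0 < t → ∀ x, ContDiffAt ℝ 1 (fun s => w s x) t)
    (h_space : ∀ t : ℝ, 0 < t → ∀ x, ContDiffAt ℝ 2 (fun y => w t y) x)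
    (h_bdd : ∀ δ T : ℝ, 0 < δ → δ < T → ∃ M : ℝ, ∀ t ∈ Set.Icc δ T, ∀ x, |w t x| ≤ M)
    (h_pde : ∀ t : ℝ, 0 < t → ∀ x,
      deriv (fun s => w s x) t = laplacian (w t) x + w t x - (w t x) ^ 3)
    (t : ℝ) (ht : 0 < t) (x : EuclideanSpace ℝ (Fin d)) : w t x ≤ phiAC t := by
  obtain ⟨α, hα_def⟩ : ∃ a : ℝ, a = 1 + 2*(d:ℝ) := ⟨_, rfl⟩
  have hαpos : 0 < α := by rw [hα_def]; positivity
  -- Step 1: reduce to bound with delay δ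
  suffices hstep : ∀ δ ∈ Set.Ioo (0:ℝ) t, w t x ≤ phiAC (t - δ) by
    have h1 : Tendsto (fun δ : ℝ => t - δ) (nhdsWithin 0 (Set.Ioi 0)) (nhds t) := by
      have : Tendsto (fun δ : ℝ => t - δ) (nhds 0) (nhds (t - 0)) :=
        (continuous_const.sub continuous_id).tendsto 0
      rw [sub_zero] at this
      exact this.mono_left nhdsWithin_le_nhds
    have htend : Tendsto (fun δ : ℝ => phiAC (t - δ)) (nhdsWithin 0 (Set.Ioi 0))
        (nhds (phiAC t)) := (phiAC_continuousAt ht).tendsto.comp h1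
    apply ge_of_tendsto htend
    filter_upwards [Ioo_mem_nhdsGT_of_mem (Set.left_mem_Ico.mpr ht)] with δ hδ
    exact hstep δ hδ
  intro δ hδ
  obtain ⟨M, hM⟩ := h_bdd δ t hδ.1 hδ.2
  have hM0 : 0 ≤ M := le_trans (abs_nonneg _) (hM δ ⟨le_refl δ, hδ.2.le⟩ x)
  obtain ⟨r, hr_def⟩ : ∃ a : ℝ, a = min (δ/2) (1/(2*(M+1)^2)) := ⟨_, rfl⟩
  have hrpos : 0 < r := by rw [hr_def]; exact lt_min (by linarith [hδ.1]) (by positivity)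
  have hrδ : r < δ := by
    rw [hr_def]; exact lt_of_le_of_lt (min_le_left _ _) (by linarith [hδ.1])
  obtain ⟨δ', hδ'_def⟩ : ∃ a : ℝ, a = δ - r := ⟨_, rfl⟩
  have hδ'pos : 0 < δ' := by rw [hδ'_def]; linarith
  have hδ'δ : δ' < δ := by rw [hδ'_def]; linarith
  have hφr : M ≤ phiAC r :=
    phiAC_ge hM0 hrpos (by rw [hr_def]; exact min_le_right _ _)
  -- Step 2: penalized maximum principle
  have main : ∀ η : ℝ, 0 < η → ∀ s ∈ Set.Icc δ t, ∀ y : EuclideanSpace ℝ (Fin d),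
      Real.exp (-s) * (w s y - phiAC (s - δ')) - η * Real.exp (α*s) * (1 + ‖y‖^2) ≤ 0 := by
    intro η hη s₁ hs₁ y₁
    by_contra hpos0
    push_neg at hpos0
    -- positivity of phi on the relevant range
    have hφpos : ∀ s ∈ Set.Icc δ t, 0 < phiAC (s - δ') := fun s hs =>
      phiAC_pos (by linarith [hs.1])
    -- upper bound on Z
    have hub : ∀ s ∈ Set.Icc δ t, ∀ y : EuclideanSpace ℝ (Fin d),
        Real.exp (-s) * (w s y - phiAC (s - δ')) - η * Real.exp (α*s) * (1 + ‖y‖^2)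
          ≤ M - η * ‖y‖^2 := by
      intro s hs y
      have hwb : w s y ≤ M := le_trans (le_abs_self _) (hM s hs y)
      have hφ := hφpos s hs
      have hexpp : 0 < Real.exp (-s) := Real.exp_pos _
      have h1 : Real.exp (-s) * (w s y - phiAC (s - δ')) ≤ M := by
        rcases le_or_gt (w s y - phiAC (s - δ')) 0 with h | h
        · nlinarith
        · have hexple : Real.exp (-s) ≤ 1 := Real.exp_le_one_iff.mpr (by linarith [hs.1, hδ.1])
          nlinarith
      have h2 : η * ‖y‖^2 ≤ η * Real.exp (α*s) * (1 + ‖y‖^2) := by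
        have hE1 : (1:ℝ) ≤ Real.exp (α*s) :=
          Real.one_le_exp_iff.mpr (by nlinarith [hs.1, hδ.1, hαpos])
        nlinarith [mul_nonneg (mul_nonneg hη.le (sub_nonneg.mpr hE1)) (sq_nonneg ‖y‖),
          mul_pos hη (Real.exp_pos (α*s))]
      linarith
    -- the radius
    obtain ⟨R, hR_def⟩ : ∃ a : ℝ, a = Real.sqrt (M/η) := ⟨_, rfl⟩
    have hRnn : 0 ≤ R := by rw [hR_def]; exact Real.sqrt_nonneg _
    have hR2 : R^2 = M/η := by rw [hR_def]; exact Real.sq_sqrt (by positivity)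
    have hy₁R : ‖y₁‖ ≤ R := by
      have hub1 := hub s₁ hs₁ y₁
      have h2 : ‖y₁‖^2 ≤ M/η := by
        rw [le_div_iff₀ hη]
        nlinarith
      calc ‖y₁‖ = Real.sqrt (‖y₁‖^2) := (Real.sqrt_sq (norm_nonneg _)).symm
        _ ≤ Real.sqrt (M/η) := Real.sqrt_le_sqrt h2
        _ = R := hR_def.symm
    -- compact set and maximum
    have hKc : IsCompact (Set.Icc δ t ×ˢ
        Metric.closedBall (0 : EuclideanSpace ℝ (Fin d)) R) :=
      isCompact_Icc.prod (isCompact_closedBall 0 R)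
    have hy₁K : (s₁, y₁) ∈ Set.Icc δ t ×ˢ
        Metric.closedBall (0 : EuclideanSpace ℝ (Fin d)) R :=
      ⟨hs₁, mem_closedBall_zero_iff.mpr hy₁R⟩
    have hKne : (Set.Icc δ t ×ˢ
        Metric.closedBall (0 : EuclideanSpace ℝ (Fin d)) R).Nonempty := ⟨(s₁, y₁), hy₁K⟩
    have hFcont : ContinuousOn (fun p : ℝ × EuclideanSpace ℝ (Fin d) =>
        Real.exp (-p.1) * (w p.1 p.2 - phiAC (p.1 - δ')) - η * Real.exp (α*p.1) * (1 + ‖p.2‖^2))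
        (Set.Icc δ t ×ˢ Metric.closedBall (0 : EuclideanSpace ℝ (Fin d)) R) := by
      have c1 : ContinuousOn (fun p : ℝ × EuclideanSpace ℝ (Fin d) => w p.1 p.2)
          (Set.Icc δ t ×ˢ Metric.closedBall (0 : EuclideanSpace ℝ (Fin d)) R) := by
        apply h_cont.mono
        intro p hp
        exact ⟨le_trans hδ.1.le hp.1.1, trivial⟩
      have c2 : ContinuousOn (fun p : ℝ × EuclideanSpace ℝ (Fin d) => phiAC (p.1 - δ'))
          (Set.Icc δ t ×ˢ Metric.closedBall (0 : EuclideanSpace ℝ (Fin d)) R) := by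
        apply ContinuousOn.comp (t := Set.Ioi (0:ℝ))
          (fun a ha => (phiAC_continuousAt ha).continuousWithinAt)
          ((continuous_fst.sub continuous_const).continuousOn)
        intro p hp
        have h1 : δ ≤ p.1 := hp.1.1
        show p.1 - δ' ∈ Set.Ioi (0:ℝ)
        exact Set.mem_Ioi.mpr (by linarith)
      have c3 : ContinuousOn (fun p : ℝ × EuclideanSpace ℝ (Fin d) => Real.exp (-p.1))
          (Set.Icc δ t ×ˢ Metric.closedBall (0 : EuclideanSpace ℝ (Fin d)) R) :=
        (Real.continuous_exp.comp continuous_fst.neg).continuousOn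
      have c4 : ContinuousOn (fun p : ℝ × EuclideanSpace ℝ (Fin d) =>
          η * Real.exp (α*p.1) * (1 + ‖p.2‖^2))
          (Set.Icc δ t ×ˢ Metric.closedBall (0 : EuclideanSpace ℝ (Fin d)) R) := by
        exact ((continuous_const.mul (Real.continuous_exp.comp
          (continuous_const.mul continuous_fst))).mul
          (continuous_const.add ((continuous_snd.norm).pow 2))).continuousOn
      exact (c3.mul (c1.sub c2)).sub c4
    obtain ⟨p₀, hp₀K, hp₀max⟩ := hKc.exists_isMaxOn hKne hFcont
    obtain ⟨t₀, y₀⟩ := p₀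
    have ht₀mem : t₀ ∈ Set.Icc δ t := hp₀K.1
    have ht₀pos : 0 < t₀ := lt_of_lt_of_le hδ.1 ht₀mem.1
    have hmax₁ := hp₀max hy₁K
    simp only [Set.mem_setOf_eq] at hmax₁
    have hFp₀pos : 0 < Real.exp (-t₀) * (w t₀ y₀ - phiAC (t₀ - δ')) -
        η * Real.exp (α*t₀) * (1 + ‖y₀‖^2) := lt_of_lt_of_le hpos0 hmax₁
    -- global maximality
    have hglobal : ∀ s ∈ Set.Icc δ t, ∀ y : EuclideanSpace ℝ (Fin d),
        Real.exp (-s) * (w s y - phiAC (s - δ')) - η * Real.exp (α*s) * (1 + ‖y‖^2)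
          ≤ Real.exp (-t₀) * (w t₀ y₀ - phiAC (t₀ - δ')) -
            η * Real.exp (α*t₀) * (1 + ‖y₀‖^2) := by
      intro s hs y
      rcases le_or_gt ‖y‖ R with h | h
      · have hmem : (s, y) ∈ Set.Icc δ t ×ˢ
            Metric.closedBall (0 : EuclideanSpace ℝ (Fin d)) R :=
          ⟨hs, mem_closedBall_zero_iff.mpr h⟩
        have := hp₀max hmem
        simpa only [Set.mem_setOf_eq] using this
      · have h1 := hub s hs y
        have h2 : M < η * ‖y‖^2 := by
          have : R^2 < ‖y‖^2 := by nlinarith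
          rw [hR2] at this
          rw [div_lt_iff₀ hη] at this
          linarith [this]
        linarith
    -- t₀ is strictly greater than δ
    have ht₀δ : δ < t₀ := by
      rcases eq_or_lt_of_le ht₀mem.1 with h | h
      · exfalso
        have hδr : δ - δ' = r := by simp only [hδ'_def]; ring
        have hwb : w t₀ y₀ ≤ M := le_trans (le_abs_self _) (hM t₀ ht₀mem y₀)
        have hφδ : M ≤ phiAC (t₀ - δ') := by
          rw [← h, hδr]
          exact hφr
        have hEpos : 0 < η * Real.exp (α*t₀) * (1 + ‖y₀‖^2) := by positivity
        have hexpp : 0 < Real.exp (-t₀) := Real.exp_pos _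
        nlinarith
      · exact h
    have ht₀t : t₀ ≤ t := ht₀mem.2
    have ht₀δ'pos : 0 < t₀ - δ' := by linarith
    -- spatial estimate coordinate by coordinate
    have hspace_i : ∀ i : Fin d,
        Real.exp (-t₀) * (fderiv ℝ (fun y => fderiv ℝ (w t₀) y (EuclideanSpace.single i 1)) y₀
          (EuclideanSpace.single i 1)) ≤ 2 * (η * Real.exp (α*t₀)) := by
      intro i
      obtain ⟨v, hv_def⟩ : ∃ a : EuclideanSpace ℝ (Fin d),
        a = EuclideanSpace.single i (1:ℝ) := ⟨_, rfl⟩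
      have hv1 : ‖v‖ = 1 := by rw [hv_def]; simp [EuclideanSpace.norm_single]
      obtain ⟨g, hg_def⟩ : ∃ gg : ℝ → ℝ, gg = fun s : ℝ =>
          Real.exp (-t₀) * w t₀ (y₀ + s • v)
            + ((-(Real.exp (-t₀) * phiAC (t₀ - δ')) - η * Real.exp (α*t₀) * (1 + ‖y₀‖^2))
              + (-(η * Real.exp (α*t₀) * (2 * (inner ℝ y₀ v : ℝ)))) * s
              + (-(η * Real.exp (α*t₀))) * s^2) := ⟨_, rfl⟩
      have hg_app : ∀ s : ℝ, g s =
          Real.exp (-t₀) * w t₀ (y₀ + s • v)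
            + ((-(Real.exp (-t₀) * phiAC (t₀ - δ')) - η * Real.exp (α*t₀) * (1 + ‖y₀‖^2))
              + (-(η * Real.exp (α*t₀) * (2 * (inner ℝ y₀ v : ℝ)))) * s
              + (-(η * Real.exp (α*t₀))) * s^2) := by
        intro s; rw [hg_def]
      have hns : ∀ s : ℝ, ‖y₀ + s • v‖^2 = ‖y₀‖^2 + 2*(s*(inner ℝ y₀ v : ℝ)) + s^2 := by
        intro s
        rw [norm_add_sq_real, real_inner_smul_right, norm_smul]
        simp [hv1, mul_pow, sq_abs]
      have hgF : ∀ s : ℝ, g s = Real.exp (-t₀) * (w t₀ (y₀ + s • v) - phiAC (t₀ - δ')) -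
          η * Real.exp (α*t₀) * (1 + ‖y₀ + s • v‖^2) := by
        intro s
        rw [hg_app s, hns s]
        ring
      have hmax : IsLocalMax g 0 := by
        apply Filter.Eventually.of_forall
        intro s
        have h1 := hglobal t₀ ht₀mem (y₀ + s • v)
        have h2 : g 0 = Real.exp (-t₀) * (w t₀ y₀ - phiAC (t₀ - δ')) -
            η * Real.exp (α*t₀) * (1 + ‖y₀‖^2) := by
          rw [hgF 0]; simp
        rw [hgF s, h2]
        exact h1
      have hqs : ∀ s : ℝ, ContDiffAt ℝ 2 (fun s : ℝ => w t₀ (y₀ + s • v)) s := by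
        intro s
        have haff : ContDiff ℝ 2 (fun s : ℝ => y₀ + s • v) :=
          contDiff_const.add (contDiff_id.smul contDiff_const)
        exact (h_space t₀ ht₀pos _).comp s haff.contDiffAt
      have hgC2 : ContDiffAt ℝ 2 g 0 := by
        rw [hg_def]
        apply ContDiffAt.add
        · exact contDiffAt_const.mul (hqs 0)
        · apply ContDiffAt.add
          · exact contDiffAt_const.add (contDiffAt_const.mul contDiffAt_id)
          · exact contDiffAt_const.mul (contDiffAt_id.pow 2)
      have h2nd : deriv (deriv g) 0 ≤ 0 := secondDeriv_nonpos_of_localMax hgC2 hmax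
      -- compute the second derivative
      have hderiv_g : deriv g = fun s : ℝ =>
          Real.exp (-t₀) * deriv (fun s : ℝ => w t₀ (y₀ + s • v)) s
            + ((-(η * Real.exp (α*t₀) * (2 * (inner ℝ y₀ v : ℝ))))
              + 2*(-(η * Real.exp (α*t₀)))*s) := by
        funext s
        have hq' : HasDerivAt (fun s : ℝ => w t₀ (y₀ + s • v))
            (deriv (fun s : ℝ => w t₀ (y₀ + s • v)) s) s :=
          ((hqs s).differentiableAt (by norm_num)).hasDerivAt
        have hpoly : HasDerivAt (fun s : ℝ =>
            (-(Real.exp (-t₀) * phiAC (t₀ - δ')) - η * Real.exp (α*t₀) * (1 + ‖y₀‖^2))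
              + (-(η * Real.exp (α*t₀) * (2 * (inner ℝ y₀ v : ℝ)))) * s
              + (-(η * Real.exp (α*t₀))) * s^2)
            ((-(η * Real.exp (α*t₀) * (2 * (inner ℝ y₀ v : ℝ))))
              + 2*(-(η * Real.exp (α*t₀)))*s) s := by
          have h1 : HasDerivAt (fun s : ℝ =>
              (-(Real.exp (-t₀) * phiAC (t₀ - δ')) - η * Real.exp (α*t₀) * (1 + ‖y₀‖^2))
                + (-(η * Real.exp (α*t₀) * (2 * (inner ℝ y₀ v : ℝ)))) * s)
              (-(η * Real.exp (α*t₀) * (2 * (inner ℝ y₀ v : ℝ)))) s := by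
            simpa using (((hasDerivAt_id s).const_mul
              (-(η * Real.exp (α*t₀) * (2 * (inner ℝ y₀ v : ℝ))))).const_add
              ((-(Real.exp (-t₀) * phiAC (t₀ - δ')) - η * Real.exp (α*t₀) * (1 + ‖y₀‖^2))))
          have h2 : HasDerivAt (fun s : ℝ => (-(η * Real.exp (α*t₀))) * s^2)
              ((-(η * Real.exp (α*t₀))) * (2*s)) s := by
            simpa using (hasDerivAt_pow 2 s).const_mul (-(η * Real.exp (α*t₀)))
          have := h1.add h2
          exact this.congr_deriv (by ring)
        have htotal := (hq'.const_mul (Real.exp (-t₀))).add hpoly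
        rw [hg_def]
        exact htotal.deriv
      have hD2 : HasDerivAt (deriv (fun s : ℝ => w t₀ (y₀ + s • v)))
          (fderiv ℝ (fun y => fderiv ℝ (w t₀) y v) y₀ v) 0 :=
        slice_hasDerivAt_deriv (fun z => h_space t₀ ht₀pos z)
      have hD2' : HasDerivAt (deriv g)
          (Real.exp (-t₀) * fderiv ℝ (fun y => fderiv ℝ (w t₀) y v) y₀ v
            + 2*(-(η * Real.exp (α*t₀)))) 0 := by
        rw [hderiv_g]
        have h1 := (hD2.const_mul (Real.exp (-t₀)))
        have h2 : HasDerivAt (fun s : ℝ =>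
            (-(η * Real.exp (α*t₀) * (2 * (inner ℝ y₀ v : ℝ))))
              + 2*(-(η * Real.exp (α*t₀)))*s) (2*(-(η * Real.exp (α*t₀)))) 0 := by
          simpa using ((hasDerivAt_id (0:ℝ)).const_mul
            (2*(-(η * Real.exp (α*t₀))))).const_add
            (-(η * Real.exp (α*t₀) * (2 * (inner ℝ y₀ v : ℝ))))
        exact h1.add h2
      have hval : Real.exp (-t₀) * fderiv ℝ (fun y => fderiv ℝ (w t₀) y v) y₀ v
          + 2*(-(η * Real.exp (α*t₀))) ≤ 0 := by
        rw [← hD2'.deriv]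
        exact h2nd
      rw [hv_def] at hval
      linarith
    -- sum over coordinates
    have hsum : Real.exp (-t₀) * laplacian (w t₀) y₀ ≤ 2*(d:ℝ)*(η*Real.exp (α*t₀)) := by
      unfold laplacian
      rw [Finset.mul_sum]
      calc ∑ i : Fin d, Real.exp (-t₀) *
            fderiv ℝ (fun y => fderiv ℝ (w t₀) y (EuclideanSpace.single i 1)) y₀
              (EuclideanSpace.single i 1)
          ≤ ∑ _i : Fin d, 2 * (η * Real.exp (α*t₀)) :=
            Finset.sum_le_sum (fun i _ => hspace_i i)
        _ = (d:ℝ) * (2 * (η * Real.exp (α*t₀))) := by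
            rw [Finset.sum_const, Finset.card_univ, Fintype.card_fin]; simp [nsmul_eq_mul]
        _ = 2*(d:ℝ)*(η*Real.exp (α*t₀)) := by ring
    -- time derivative at the maximum point
    have hW' : HasDerivAt (fun s => w s y₀)
        (laplacian (w t₀) y₀ + w t₀ y₀ - (w t₀ y₀)^3) t₀ := by
      have h1 := ((h_time t₀ ht₀pos y₀).differentiableAt (by norm_num)).hasDerivAt
      rwa [h_pde t₀ ht₀pos y₀] at h1
    have hφ' : HasDerivAt (fun s => phiAC (s - δ'))
        (phiAC (t₀ - δ') - phiAC (t₀-δ')^3) t₀ := by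
      have := (hasDerivAt_phiAC ht₀δ'pos).comp t₀ ((hasDerivAt_id t₀).sub_const δ')
      simpa [Function.comp_def] using this
    have hexp' : HasDerivAt (fun s : ℝ => Real.exp (-s)) (-Real.exp (-t₀)) t₀ := by
      have := (Real.hasDerivAt_exp (-t₀)).comp t₀ ((hasDerivAt_id t₀).neg)
      simpa [Function.comp_def] using this
    have hexp2' : HasDerivAt (fun s : ℝ => η * Real.exp (α*s) * (1 + ‖y₀‖^2))
        (η * (Real.exp (α*t₀) * α) * (1 + ‖y₀‖^2)) t₀ := by
      have h1 : HasDerivAt (fun s : ℝ => Real.exp (α*s)) (Real.exp (α*t₀) * α) t₀ := by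
        have := (Real.hasDerivAt_exp (α*t₀)).comp t₀ ((hasDerivAt_id t₀).const_mul α)
        simpa [Function.comp_def] using this
      exact (h1.const_mul η).mul_const _
    have hτ := (hexp'.mul (hW'.sub hφ')).sub hexp2'
    have hVnonneg : 0 ≤ (-Real.exp (-t₀)) * (w t₀ y₀ - phiAC (t₀ - δ'))
        + Real.exp (-t₀) * ((laplacian (w t₀) y₀ + w t₀ y₀ - (w t₀ y₀)^3)
          - (phiAC (t₀ - δ') - phiAC (t₀-δ')^3))
        - η * (Real.exp (α*t₀) * α) * (1 + ‖y₀‖^2) := by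
      apply deriv_nonneg_of_isMaxOn_right ht₀δ hτ
      intro s hs
      exact hglobal s ⟨hs.1, le_trans hs.2 ht₀t⟩ y₀
    -- w ≥ phi at max point
    have hP := phiAC_pos ht₀δ'pos
    have hexpp : 0 < Real.exp (-t₀) := Real.exp_pos _
    have hWP : phiAC (t₀ - δ') ≤ w t₀ y₀ := by
      have hEpos : 0 < η * Real.exp (α*t₀) * (1 + ‖y₀‖^2) := by positivity
      nlinarith [hFp₀pos]
    have hcube : phiAC (t₀-δ')^3 ≤ (w t₀ y₀)^3 := pow_le_pow_left₀ hP.le hWP 3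
    -- contradiction
    have h5 : Real.exp (-t₀) * (phiAC (t₀-δ')^3 - (w t₀ y₀)^3) ≤ 0 :=
      mul_nonpos_of_nonneg_of_nonpos hexpp.le (by linarith)
    have hEpos' : 0 < η * Real.exp (α*t₀) := by positivity
    have hVeq : (-Real.exp (-t₀)) * (w t₀ y₀ - phiAC (t₀ - δ'))
        + Real.exp (-t₀) * ((laplacian (w t₀) y₀ + w t₀ y₀ - (w t₀ y₀)^3)
          - (phiAC (t₀ - δ') - phiAC (t₀-δ')^3))
        - η * (Real.exp (α*t₀) * α) * (1 + ‖y₀‖^2)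
        = Real.exp (-t₀) * laplacian (w t₀) y₀
          + Real.exp (-t₀) * (phiAC (t₀-δ')^3 - (w t₀ y₀)^3)
          - η * (Real.exp (α*t₀) * α) * (1 + ‖y₀‖^2) := by ring
    rw [hVeq] at hVnonneg
    have h6 : η * Real.exp (α*t₀) * α ≤ η * (Real.exp (α*t₀) * α) * (1 + ‖y₀‖^2) := by
      nlinarith [mul_nonneg (mul_nonneg hEpos'.le hαpos.le) (sq_nonneg ‖y₀‖)]
    have h7 : η * Real.exp (α*t₀) * α
        = η * Real.exp (α*t₀) + 2 * (d:ℝ) * (η * Real.exp (α*t₀)) := by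
      rw [hα_def]; ring
    linarith [hsum, h5, hVnonneg, hEpos', h6, h7]
  -- Step 3: conclude
  have hZ : ∀ η : ℝ, 0 < η →
      Real.exp (-t) * (w t x - phiAC (t - δ')) ≤ η * Real.exp (α*t) * (1 + ‖x‖^2) := by
    intro η hη
    have := main η hη t ⟨hδ.2.le, le_refl t⟩ x
    linarith
  have h0 : Real.exp (-t) * (w t x - phiAC (t - δ')) ≤ 0 := by
    by_contra hc
    push_neg at hc
    set c := Real.exp (-t) * (w t x - phiAC (t - δ')) with hc_def
    have hCpos : 0 < Real.exp (α*t) * (1 + ‖x‖^2) := by positivity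
    have := hZ (c / (2 * (Real.exp (α*t) * (1 + ‖x‖^2)))) (by positivity)
    rw [show c / (2 * (Real.exp (α*t) * (1 + ‖x‖^2))) * Real.exp (α*t) * (1 + ‖x‖^2)
        = c / 2 by field_simp] at this
    linarith
  have h1 : w t x ≤ phiAC (t - δ') := by
    have hexp : 0 < Real.exp (-t) := Real.exp_pos _
    nlinarith
  have h2 : phiAC (t - δ') ≤ phiAC (t - δ) := by
    apply phiAC_antitone (by linarith [hδ.2]) (by linarith)
  linarith

end AllenCahnHelpers

/-- A priori bound for the Allen–Cahn equation `∂_t u = Δu + u - u³` on `(0,∞) × ℝ^d`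
with continuous initial condition `u₀` of at most exponential growth:
`|u(t,x)| ≤ e^t / sqrt(e^{2t} - 1)` for all `t > 0`. -/
theorem stmt8 (d : ℕ) (hd : 1 ≤ d) (u : ℝ → EuclideanSpace ℝ (Fin d) → ℝ)
    (u₀ : EuclideanSpace ℝ (Fin d) → ℝ)
    (h_cont : ContinuousOn (fun p : ℝ × EuclideanSpace ℝ (Fin d) => u p.1 p.2)
      (Set.Ici 0 ×ˢ Set.univ))
    (h_time : ∀ t : ℝ, 0 < t → ∀ x, ContDiffAt ℝ 1 (fun s => u s x) t)
    (h_space : ∀ t : ℝ, 0 < t → ∀ x, ContDiffAt ℝ 2 (fun y => u t y) x)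
    (h_bdd : ∀ δ T : ℝ, 0 < δ → δ < T → ∃ M : ℝ, ∀ t ∈ Set.Icc δ T, ∀ x, |u t x| ≤ M)
    (h_pde : ∀ t : ℝ, 0 < t → ∀ x,
      deriv (fun s => u s x) t = laplacian (u t) x + u t x - (u t x) ^ 3)
    (h_init : ∀ x, u 0 x = u₀ x)
    (h_u₀_cont : Continuous u₀)
    (h_growth : ∃ M : ℝ, ∀ x, |u₀ x| * Real.exp (-‖x‖) ≤ M) :
    ∀ t : ℝ, 0 < t → ∀ x, |u t x| ≤ Real.exp t / Real.sqrt (Real.exp (2 * t) - 1) := by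
  intro t ht x
  rw [phiAC_eq_target ht, abs_le]
  constructor
  · -- lower bound via the upper bound for -u
    have hneg := keyBound d (fun s y => -(u s y)) h_cont.neg
      (fun t ht x => (h_time t ht x).neg)
      (fun t ht x => (h_space t ht x).neg)
      (by
        intro δ T hδ hT
        obtain ⟨M, hM⟩ := h_bdd δ T hδ hT
        exact ⟨M, fun t ht x => by simpa [abs_neg] using hM t ht x⟩)
      (by
        intro t ht x
        rw [deriv.fun_neg (f := fun s => u s x), h_pde t ht x, laplacian_neg]
        ring)
      t ht x
    simp only [neg_le] at hneg ⊢
    linarith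
  · exact keyBound d u h_cont h_time h_space h_bdd h_pde t ht x
end
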